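/- Let A be a unital C*-algebra and a ∈ A a positive element. The seminorm r_a is faithful on hermitian continuous linear functionals (i.e., r_a(f) = 0 implies f = 0 for every hermitian continuous linear functional f) if and only if f(a) > 0 for every nonzero positive continuous linear functional f on A. -/

import Mathlib

open scoped ComplexOrder NNReal

variable {A : Type*} [CStarAlgebra A] [PartialOrder A] [StarOrderedRing A]

/-- A continuous linear functional on a C*-algebra is positive if it is nonnegative on
positive elements (using the complex order). -/
def IsPosFunctional {A : Type*} [CStarAlgebra A] [PartialOrder A] [StarOrderedRing A]
    (f : A →L[ℂ] ℂ) : Prop :=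
  ∀ x : A, 0 ≤ x → 0 ≤ f x

/-- A continuous linear functional is hermitian if `f (star x) = conj (f x)` for all `x`. -/
def IsHermitianFunctional {A : Type*} [CStarAlgebra A] (f : A →L[ℂ] ℂ) : Prop :=
  ∀ x : A, f (star x) = starRingEnd ℂ (f x)

/-- The seminorm `r_a` associated with a positive element `a`:
`r_a(f) = inf { f₁(a) + f₂(a) | f = f₁ - f₂, f₁, f₂ positive }`. -/
noncomputable def rSeminorm {A : Type*} [CStarAlgebra A] [PartialOrder A] [StarOrderedRing A]
    (a : A) (f : A →L[ℂ] ℂ) : ℝ :=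
  sInf { r : ℝ | ∃ f₁ f₂ : A →L[ℂ] ℂ, IsPosFunctional f₁ ∧ IsPosFunctional f₂ ∧
    f = f₁ - f₂ ∧ (r : ℂ) = f₁ a + f₂ a }

namespace RSem

lemma smul_one_eq (c : ℝ) : (algebraMap ℝ A c) = c • (1 : A) :=
  Algebra.algebraMap_eq_smul_one c

lemma nonneg_add_norm {x : A} (hx : IsSelfAdjoint x) :
    (0 : A) ≤ x + algebraMap ℝ A ‖x‖ := by
  have h := hx.neg_algebraMap_norm_le_self
  rw [← sub_nonneg] at h
  rwa [sub_neg_eq_add] at h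

lemma algebraMap_norm_nonneg (x : A) : (0 : A) ≤ algebraMap ℝ A ‖x‖ := by
  rw [smul_one_eq]
  exact smul_nonneg (norm_nonneg x) zero_le_one

lemma real_part_smul (x : A) :
    x = (2:ℂ)⁻¹ • (x + star x) + Complex.I • ((2*Complex.I)⁻¹ • (x - star x)) := by
  rw [smul_smul]
  have h1 : Complex.I * (2*Complex.I)⁻¹ = (2:ℂ)⁻¹ := by
    rw [mul_inv]
    rw [mul_comm, mul_assoc, Complex.inv_I]
    simp [Complex.I_mul_I]
  rw [h1, ← smul_add]
  have : x + star x + (x - star x) = (2:ℂ) • x := by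
    rw [two_smul]; abel
  rw [this, smul_smul]
  norm_num

lemma isSelfAdjoint_re_part (x : A) : IsSelfAdjoint ((2:ℂ)⁻¹ • (x + star x)) := by
  rw [IsSelfAdjoint, star_smul, star_add, star_star]
  congr 1
  · simp
  · abel

lemma isSelfAdjoint_im_part (x : A) : IsSelfAdjoint ((2*Complex.I)⁻¹ • (x - star x)) := by
  rw [IsSelfAdjoint, star_smul, star_sub, star_star]
  have hz : ((2*Complex.I)⁻¹:ℂ) = -(2⁻¹) * Complex.I := by
    rw [mul_inv, Complex.inv_I]; ring
  have h1 : star ((2*Complex.I)⁻¹ : ℂ) = -(2*Complex.I)⁻¹ := by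
    rw [hz, Complex.star_def, map_mul, map_neg, map_inv₀, map_ofNat, Complex.conj_I]
    ring
  rw [h1, neg_smul, ← smul_neg, neg_sub]

lemma norm_re_part_le (x : A) : ‖(2:ℂ)⁻¹ • (x + star x)‖ ≤ ‖x‖ := by
  rw [norm_smul]
  have h2 : ‖(2:ℂ)⁻¹‖ = 2⁻¹ := by simp
  rw [h2]
  calc 2⁻¹ * ‖x + star x‖ ≤ 2⁻¹ * (‖x‖ + ‖star x‖) := by
        gcongr; exact norm_add_le _ _
    _ = ‖x‖ := by rw [norm_star]; ring

lemma norm_im_part_le (x : A) : ‖(2*Complex.I)⁻¹ • (x - star x)‖ ≤ ‖x‖ := by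
  rw [norm_smul]
  have h2 : ‖((2*Complex.I)⁻¹ : ℂ)‖ = 2⁻¹ := by simp
  rw [h2]
  calc 2⁻¹ * ‖x - star x‖ ≤ 2⁻¹ * (‖x‖ + ‖star x‖) := by
        gcongr; exact norm_sub_le _ _
    _ = ‖x‖ := by rw [norm_star]; ring

/-- A positive functional is real on selfadjoint elements. -/
lemma pos_real_on_sa {f : A →L[ℂ] ℂ} (hf : IsPosFunctional f) {x : A}
    (hx : IsSelfAdjoint x) : f x = ((f x).re : ℂ) := by
  have h1 := hf _ (nonneg_add_norm hx)
  have h2 := hf _ (algebraMap_norm_nonneg x)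
  have e : f x = f (x + algebraMap ℝ A ‖x‖) - f (algebraMap ℝ A ‖x‖) := by
    rw [map_add]; ring
  have i1 := (Complex.nonneg_iff.mp h1).2
  have i2 := (Complex.nonneg_iff.mp h2).2
  have him : (f x).im = 0 := by rw [e, Complex.sub_im, ← i1, ← i2]; ring
  exact (Complex.ext (by simp) (by simp [him])).symm

lemma star_decomp {h k : A} (hh : IsSelfAdjoint h) (hk : IsSelfAdjoint k) :
    star (h + Complex.I • k) = h - Complex.I • k := by
  rw [star_add, hh.star_eq, star_smul, hk.star_eq, Complex.star_def, Complex.conj_I, neg_smul]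
  abel

/-- A positive functional is hermitian. -/
lemma pos_hermitian {f : A →L[ℂ] ℂ} (hf : IsPosFunctional f) :
    IsHermitianFunctional f := by
  have key : ∀ h k : A, IsSelfAdjoint h → IsSelfAdjoint k →
      f (star (h + Complex.I • k)) = starRingEnd ℂ (f (h + Complex.I • k)) := by
    intro h k hh hk
    have fh : f h = ((f h).re : ℂ) := pos_real_on_sa hf hh
    have fk : f k = ((f k).re : ℂ) := pos_real_on_sa hf hk
    rw [star_decomp hh hk, map_sub, map_add, map_smul, smul_eq_mul,
      map_add, map_mul, fh, fk, Complex.conj_ofReal, Complex.conj_ofReal, Complex.conj_I]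
    ring
  intro x
  have hx := real_part_smul x
  calc f (star x) = f (star ((2:ℂ)⁻¹ • (x + star x)
        + Complex.I • ((2*Complex.I)⁻¹ • (x - star x)))) := by rw [← hx]
    _ = starRingEnd ℂ (f ((2:ℂ)⁻¹ • (x + star x)
        + Complex.I • ((2*Complex.I)⁻¹ • (x - star x)))) :=
      key _ _ (isSelfAdjoint_re_part x) (isSelfAdjoint_im_part x)
    _ = starRingEnd ℂ (f x) := by rw [← hx]

/-- Norm bound for positive functionals on selfadjoint elements. -/
lemma pos_abs_re_le {f : A →L[ℂ] ℂ} (hf : IsPosFunctional f) {x : A}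
    (hx : IsSelfAdjoint x) : ‖f x‖ ≤ (f 1).re * ‖x‖ := by
  have hreal : f x = ((f x).re : ℂ) := pos_real_on_sa hf hx
  have key : ∀ y : A, IsSelfAdjoint y → (f y).re ≤ (f 1).re * ‖y‖ := by
    intro y hy
    have h1 : (0:A) ≤ algebraMap ℝ A ‖y‖ - y := sub_nonneg.mpr hy.le_algebraMap_norm_self
    have h2 := (Complex.nonneg_iff.mp (hf _ h1)).1
    have e : f (algebraMap ℝ A ‖y‖ - y) = ‖y‖ • f 1 - f y := by
      rw [map_sub, smul_one_eq, f.map_smul_of_tower]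
    rw [e] at h2
    have e2 : (‖y‖ • f 1 - f y).re = ‖y‖ * (f 1).re - (f y).re := by
      rw [Complex.sub_re, Complex.smul_re, smul_eq_mul]
    rw [e2] at h2
    linarith [h2]
  have k1 := key x hx
  have k2 := key (-x) hx.neg
  rw [map_neg, Complex.neg_re, norm_neg] at k2
  rw [hreal, Complex.norm_real, Real.norm_eq_abs, abs_le]
  constructor <;> linarith

/-- The basic norm bound for positive functionals. -/
lemma pos_norm_apply_le {f : A →L[ℂ] ℂ} (hf : IsPosFunctional f) (x : A) :
    ‖f x‖ ≤ 2 * (f 1).re * ‖x‖ := by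
  have f1re : 0 ≤ (f 1).re := (Complex.nonneg_iff.mp (hf 1 zero_le_one)).1
  have key : ∀ h k : A, IsSelfAdjoint h → IsSelfAdjoint k → ‖h‖ ≤ ‖x‖ → ‖k‖ ≤ ‖x‖ →
      ‖f (h + Complex.I • k)‖ ≤ 2 * (f 1).re * ‖x‖ := by
    intro h k hh hk hhn hkn
    calc ‖f (h + Complex.I • k)‖ = ‖f h + Complex.I * f k‖ := by
          rw [map_add, map_smul, smul_eq_mul]
      _ ≤ ‖f h‖ + ‖Complex.I * f k‖ := norm_add_le _ _
      _ = ‖f h‖ + ‖f k‖ := by rw [norm_mul, Complex.norm_I, one_mul]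
      _ ≤ (f 1).re * ‖h‖ + (f 1).re * ‖k‖ := by
          gcongr
          · exact pos_abs_re_le hf hh
          · exact pos_abs_re_le hf hk
      _ ≤ (f 1).re * ‖x‖ + (f 1).re * ‖x‖ := by gcongr
      _ = 2 * (f 1).re * ‖x‖ := by ring
  calc ‖f x‖ = ‖f ((2:ℂ)⁻¹ • (x + star x)
        + Complex.I • ((2*Complex.I)⁻¹ • (x - star x)))‖ := by rw [← real_part_smul x]
    _ ≤ 2 * (f 1).re * ‖x‖ :=
      key _ _ (isSelfAdjoint_re_part x) (isSelfAdjoint_im_part x)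
        (norm_re_part_le x) (norm_im_part_le x)

lemma pos_opNorm_le {f : A →L[ℂ] ℂ} (hf : IsPosFunctional f) :
    ‖f‖ ≤ 2 * (f 1).re := by
  have f1re : 0 ≤ (f 1).re := (Complex.nonneg_iff.mp (hf 1 zero_le_one)).1
  exact f.opNorm_le_bound (by linarith) fun x => by
    calc ‖f x‖ ≤ 2 * (f 1).re * ‖x‖ := pos_norm_apply_le hf x


/-- Jordan decomposition: every hermitian continuous functional is a difference of two
positive continuous functionals. -/
lemma exists_jordan {f : A →L[ℂ] ℂ} (hf : IsHermitianFunctional f) :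
    ∃ f₁ f₂ : A →L[ℂ] ℂ, IsPosFunctional f₁ ∧ IsPosFunctional f₂ ∧ f = f₁ - f₂ := by
  classical
  set M : ℝ := ‖f‖ with hM
  have hM0 : 0 ≤ M := norm_nonneg f
  have hFbound : ∀ x : A, (f x).re ≤ M * ‖x‖ := fun x =>
    (le_abs_self _).trans ((Complex.abs_re_le_norm (f x)).trans (f.le_opNorm x))
  -- the convex cone encoding the constraints
  let C : ConvexCone ℝ (A × ℝ) :=
  { carrier := {p | ∃ k₁ k₂ y s t, 0 ≤ k₁ ∧ 0 ≤ k₂ ∧ p.1 = k₁ + k₂ + y ∧ p.2 = s + t ∧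
      s ≤ (f k₁).re ∧ t ≤ -(2*M) * ‖y‖}
    smul_mem' := by
      rintro c hc p ⟨k₁, k₂, y, s, t, hk₁, hk₂, h1, h2, hs, ht⟩
      refine ⟨c • k₁, c • k₂, c • y, c * s, c * t, smul_nonneg hc.le hk₁,
        smul_nonneg hc.le hk₂, ?_, ?_, ?_, ?_⟩
      · show c • p.1 = _
        rw [h1, smul_add, smul_add]
      · show c • p.2 = _
        rw [h2, smul_eq_mul, mul_add]
      · have : f (c • k₁) = c • f k₁ := f.map_smul_of_tower c k₁
        rw [this, Complex.smul_re, smul_eq_mul]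
        exact mul_le_mul_of_nonneg_left hs hc.le
      · rw [norm_smul, Real.norm_eq_abs, abs_of_pos hc]
        calc c * t ≤ c * (-(2*M) * ‖y‖) := mul_le_mul_of_nonneg_left ht hc.le
          _ = -(2*M) * (c * ‖y‖) := by ring
    add_mem' := by
      rintro p ⟨k₁, k₂, y, s, t, hk₁, hk₂, h1, h2, hs, ht⟩
        q ⟨l₁, l₂, z, u, v, hl₁, hl₂, g1, g2, hu, hv⟩
      refine ⟨k₁ + l₁, k₂ + l₂, y + z, s + u, t + v, add_nonneg hk₁ hl₁,
        add_nonneg hk₂ hl₂, ?_, ?_, ?_, ?_⟩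
      · show p.1 + q.1 = _
        rw [h1, g1]; abel
      · show p.2 + q.2 = _
        rw [h2, g2]; ring
      · rw [map_add, Complex.add_re]
        exact add_le_add hs hu
      · calc t + v ≤ -(2*M) * ‖y‖ + -(2*M) * ‖z‖ := add_le_add ht hv
          _ = -(2*M) * (‖y‖ + ‖z‖) := by ring
          _ ≤ -(2*M) * ‖y + z‖ := by
              rw [neg_mul, neg_mul, neg_le_neg_iff]
              exact mul_le_mul_of_nonneg_left (norm_add_le y z) (by linarith)
  }
  have memC : ∀ (k₁ k₂ y : A) (s t : ℝ), 0 ≤ k₁ → 0 ≤ k₂ → s ≤ (f k₁).re →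
      t ≤ -(2*M) * ‖y‖ → (k₁ + k₂ + y, s + t) ∈ C :=
    fun k₁ k₂ y s t h1 h2 h3 h4 => ⟨k₁, k₂, y, s, t, h1, h2, rfl, rfl, h3, h4⟩
  -- the partial functional on the span of (0, 1), sending (0, 1) to -1
  have hne : ((0:A), (1:ℝ)) ≠ 0 := by simp
  let Φ : (A × ℝ) →ₗ.[ℝ] ℝ := LinearPMap.mkSpanSingleton ((0:A), (1:ℝ)) (-1) hne
  have hdomain : Φ.domain = Submodule.span ℝ {((0:A), (1:ℝ))} := rfl
  have hnonneg : ∀ x : Φ.domain, (x : A × ℝ) ∈ C → 0 ≤ Φ x := by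
    rintro ⟨x, hx⟩ hxC
    rw [hdomain, Submodule.mem_span_singleton] at hx
    obtain ⟨c, rfl⟩ := hx
    have hval : Φ ⟨c • ((0:A), (1:ℝ)), Submodule.smul_mem _ c
        (Submodule.mem_span_singleton_self _)⟩ = c • (-1 : ℝ) :=
      LinearPMap.mkSpanSingleton'_apply _ _ _ c _
    rw [hval]
    have hxC' : (((0:A), c) : A × ℝ) ∈ C := by
      have h := hxC
      rwa [show ((⟨c • ((0:A), (1:ℝ)), _⟩ : Φ.domain) : A × ℝ)
          = (((0:A), c) : A × ℝ) from by
        show c • ((0:A), (1:ℝ)) = (((0:A), c) : A × ℝ)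
        rw [Prod.smul_mk, smul_zero, smul_eq_mul, mul_one]] at h
    obtain ⟨k₁, k₂, y, s, t, hk₁, hk₂, h1, h2, hs, ht⟩ := hxC'
    have hcoord1 : (0:A) = k₁ + k₂ + y := h1
    have hcoord2 : c = s + t := h2
    have hy : y = -(k₁ + k₂) := by
      rw [eq_neg_iff_add_eq_zero, add_comm]
      exact hcoord1.symm
    have hnorm : ‖k₁‖ ≤ ‖y‖ := by
      rw [hy, norm_neg]
      exact CStarAlgebra.norm_le_norm_of_nonneg_of_le hk₁ (le_add_of_nonneg_right hk₂)
    have hfk : (f k₁).re ≤ M * ‖y‖ := by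
      calc (f k₁).re ≤ M * ‖k₁‖ := hFbound k₁
        _ ≤ M * ‖y‖ := mul_le_mul_of_nonneg_left hnorm hM0
    have hc0 : c ≤ 0 := by
      rw [hcoord2]
      have : t ≤ -(2*M) * ‖y‖ := ht
      nlinarith [norm_nonneg y]
    simp only [smul_eq_mul]
    linarith
  have hdense : ∀ p : A × ℝ, ∃ x : Φ.domain, (x : A × ℝ) + p ∈ C := by
    intro p
    refine ⟨⟨(-(2*M) * ‖p.1‖ - p.2) • ((0:A), (1:ℝ)), Submodule.smul_mem _ _
      (Submodule.mem_span_singleton_self _)⟩, ?_⟩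
    have heq : ((-(2*M) * ‖p.1‖ - p.2) • ((0:A), (1:ℝ)) : A × ℝ) + p
        = ((0:A) + 0 + p.1, 0 + (-(2*M) * ‖p.1‖)) := by
      rw [Prod.smul_mk, smul_zero, smul_eq_mul, mul_one]
      rw [show p = (p.1, p.2) from rfl, Prod.mk_add_mk, Prod.mk.injEq]
      constructor
      · abel
      · ring
    rw [heq]
    exact memC 0 0 p.1 0 (-(2*M) * ‖p.1‖) le_rfl le_rfl (by simp) le_rfl
  obtain ⟨g, hgdom, hgC⟩ := riesz_extension (C.toPointedCone ⟨0, 0, 0, 0, 0, le_rfl, le_rfl, by simp, by simp, by simp, by simp⟩) Φ hnonneg hdense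
  have hgval : g ((0:A), (1:ℝ)) = -1 := by
    have := hgdom ⟨((0:A), (1:ℝ)), Submodule.mem_span_singleton_self _⟩
    rw [this, LinearPMap.mkSpanSingleton_apply]
  -- G is the first-coordinate part of g
  set G : A → ℝ := fun x => g (x, 0) with hG
  have hGdecomp : ∀ (x : A) (r : ℝ), g (x, r) = G x - r := by
    intro x r
    have : ((x, r) : A × ℝ) = (x, 0) + r • ((0:A), (1:ℝ)) := by
      rw [Prod.smul_mk]; ext <;> simp
    rw [this, map_add, map_smul, hgval, smul_eq_mul]
    ring
  have hGadd : ∀ x y : A, G (x + y) = G x + G y := by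
    intro x y
    have : ((x + y, 0) : A × ℝ) = (x, 0) + (y, 0) := by ext <;> simp
    rw [hG]; show g (x + y, 0) = g (x, 0) + g (y, 0)
    rw [this, map_add]
  have hGsmul : ∀ (c : ℝ) (x : A), G (c • x) = c * G x := by
    intro c x
    have : ((c • x, 0) : A × ℝ) = c • (x, 0) := by rw [Prod.smul_mk]; ext <;> simp
    show g (c • x, 0) = c * g (x, 0)
    rw [this, map_smul, smul_eq_mul]
  have hGF : ∀ k : A, 0 ≤ k → (f k).re ≤ G k := by
    intro k hk
    have hmem : ((k, (f k).re) : A × ℝ) ∈ C := by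
      have := memC k 0 0 ((f k).re) 0 hk le_rfl le_rfl (by simp)
      simpa using this
    have := hgC _ hmem
    rw [hGdecomp] at this
    linarith
  have hG0 : ∀ k : A, 0 ≤ k → 0 ≤ G k := by
    intro k hk
    have hmem : ((k, 0) : A × ℝ) ∈ C := by
      have h0 : (0:ℝ) ≤ (f 0).re := by simp
      have := memC 0 k 0 0 0 le_rfl hk (by simp) (by simp)
      simpa using this
    have := hgC _ hmem
    rw [hGdecomp] at this
    linarith
  have hGlb : ∀ y : A, -(2*M) * ‖y‖ ≤ G y := by
    intro y
    have hmem : ((y, -(2*M) * ‖y‖) : A × ℝ) ∈ C := by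
      have := memC 0 0 y 0 (-(2*M) * ‖y‖) le_rfl le_rfl (by simp) le_rfl
      simpa using this
    have := hgC _ hmem
    rw [hGdecomp] at this
    linarith
  have hGneg : ∀ y : A, G (-y) = -G y := by
    intro y
    have := hGadd y (-y)
    simp only [add_neg_cancel] at this
    have h0 : G 0 = 0 := by
      show g (0, 0) = 0
      have : ((0, 0) : A × ℝ) = 0 := rfl
      rw [this, map_zero]
    rw [h0] at this
    linarith
  have hGbound : ∀ y : A, |G y| ≤ 2*M * ‖y‖ := by
    intro y
    rw [abs_le]
    constructor
    · have := hGlb y; linarith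
    · have := hGlb (-y)
      rw [hGneg, norm_neg] at this
      linarith
  -- symmetrize
  set G₂ : A → ℝ := fun x => (G x + G (star x)) / 2 with hG₂
  have hG₂sa : ∀ x : A, IsSelfAdjoint x → G₂ x = G x := by
    intro x hx
    rw [hG₂]; show (G x + G (star x)) / 2 = G x
    rw [hx.star_eq]; ring
  have hG₂skew : ∀ x : A, star x = -x → G₂ x = 0 := by
    intro x hx
    show (G x + G (star x)) / 2 = 0
    rw [hx, hGneg]; ring
  let Glin : A →ₗ[ℝ] ℝ :=
  { toFun := G₂
    map_add' := by
      intro x y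
      show (G (x+y) + G (star (x+y))) / 2 = (G x + G (star x)) / 2 + (G y + G (star y)) / 2
      rw [star_add, hGadd, hGadd]
      ring
    map_smul' := by
      intro c x
      show (G (c • x) + G (star (c • x))) / 2 = c • ((G x + G (star x)) / 2)
      rw [star_smul, star_trivial, hGsmul, hGsmul, smul_eq_mul]
      ring }
  have hGlinbound : ∀ x : A, ‖Glin x‖ ≤ (2*M) * ‖x‖ := by
    intro x
    show ‖(G x + G (star x)) / 2‖ ≤ (2*M) * ‖x‖
    rw [Real.norm_eq_abs]
    have b1 := hGbound x
    have b2 := hGbound (star x)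
    rw [norm_star] at b2
    rw [abs_le] at b1 b2 ⊢
    constructor <;> [nlinarith [b1.1, b2.1]; nlinarith [b1.2, b2.2]]
  let gc : A →L[ℝ] ℝ := Glin.mkContinuous (2*M) hGlinbound
  have hgc : ∀ x : A, gc x = G₂ x := fun x => rfl
  let f₁ : A →L[ℂ] ℂ := gc.extendTo𝕜'
  have hf₁ : ∀ x : A, f₁ x = (G₂ x : ℂ) - Complex.I * (G₂ ((Complex.I : ℂ) • x) : ℂ) := by
    intro x
    rw [show f₁ x = (gc x : ℂ) - Complex.I * (gc ((Complex.I : ℂ) • x) : ℂ) from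
      ContinuousLinearMap.extendTo𝕜'_apply gc x]
    rfl
  have hf₁sa : ∀ x : A, IsSelfAdjoint x → f₁ x = ((G x : ℝ) : ℂ) := by
    intro x hx
    rw [hf₁]
    have hskew : star ((Complex.I : ℂ) • x) = -((Complex.I : ℂ) • x) := by
      rw [star_smul, hx.star_eq, Complex.star_def, Complex.conj_I, neg_smul]
    rw [hG₂skew _ hskew, hG₂sa x hx]
    simp
  have hf₁pos : IsPosFunctional f₁ := by
    intro x hx
    rw [hf₁sa x (IsSelfAdjoint.of_nonneg hx)]
    exact Complex.zero_le_real.mpr (hG0 x hx)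
  refine ⟨f₁, f₁ - f, hf₁pos, ?_, by abel⟩
  intro x hx
  have hxsa : IsSelfAdjoint x := IsSelfAdjoint.of_nonneg hx
  have hfx : f x = ((f x).re : ℂ) := by
    have := hf x
    rw [hxsa.star_eq] at this
    exact (Complex.conj_eq_iff_re.mp this.symm).symm
  rw [ContinuousLinearMap.sub_apply, hf₁sa x hxsa, hfx]
  rw [← Complex.ofReal_sub]
  exact Complex.zero_le_real.mpr (by linarith [hGF x hx])


open NormedSpace in
/-- Via weak-* compactness: if every nonzero positive functional is positive at `a`, then
there is a uniform constant `c`. -/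
lemma exists_const {a : A} (ha : 0 ≤ a)
    (h : ∀ g : A →L[ℂ] ℂ, IsPosFunctional g → g ≠ 0 → 0 < g a) :
    ∃ c : ℝ, 0 < c ∧ ∀ g : A →L[ℂ] ℂ, IsPosFunctional g → c * (g 1).re ≤ (g a).re := by
  classical
  set K : Set (WeakDual ℂ A) :=
    {g | (∀ x : A, 0 ≤ x → 0 ≤ g x) ∧ g 1 = 1} with hK
  have hzclosed : IsClosed {z : ℂ | 0 ≤ z} := by
    have : {z : ℂ | 0 ≤ z} = Complex.re ⁻¹' Set.Ici 0 ∩ Complex.im ⁻¹' {0} := by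
      ext z
      simp only [Set.mem_setOf_eq, Complex.nonneg_iff, Set.mem_inter_iff, Set.mem_preimage,
        Set.mem_Ici, Set.mem_singleton_iff, eq_comm]
    rw [this]
    exact (isClosed_Ici.preimage Complex.continuous_re).inter
      (isClosed_singleton.preimage Complex.continuous_im)
  have hKclosed : IsClosed K := by
    have h1 : IsClosed {g : WeakDual ℂ A | ∀ x : A, 0 ≤ x → 0 ≤ g x} := by
      have he : {g : WeakDual ℂ A | ∀ x : A, 0 ≤ x → 0 ≤ g x}
          = ⋂ (x : A) (_ : 0 ≤ x), (fun g : WeakDual ℂ A => g x) ⁻¹' {z : ℂ | 0 ≤ z} := by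
        ext g
        simp [Set.mem_iInter]
      rw [he]
      exact isClosed_iInter fun x => isClosed_iInter fun hx =>
        hzclosed.preimage (WeakDual.eval_continuous x)
    have h2 : IsClosed {g : WeakDual ℂ A | g 1 = 1} :=
      (isClosed_singleton (x := (1:ℂ))).preimage (WeakDual.eval_continuous (1:A))
    exact h1.inter h2
  have hsub : K ⊆ WeakDual.toStrongDual ⁻¹' Metric.closedBall 0 2 := by
    intro g hg
    rw [Set.mem_preimage, Metric.mem_closedBall, dist_zero_right]
    have hpos : IsPosFunctional (WeakDual.toStrongDual g) := hg.1
    calc ‖WeakDual.toStrongDual g‖ ≤ 2 * ((WeakDual.toStrongDual g) 1).re :=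
          pos_opNorm_le hpos
      _ = 2 := by
          rw [show ((WeakDual.toStrongDual g) 1) = g 1 from rfl, hg.2, Complex.one_re, mul_one]
  have hKcomp : IsCompact K :=
    (WeakDual.isCompact_closedBall (𝕜 := ℂ) (E := A) 0 2).of_isClosed_subset
      hKclosed hsub
  have hmemK : ∀ g : A →L[ℂ] ℂ, IsPosFunctional g → 0 < (g 1).re →
      StrongDual.toWeakDual (((g 1).re)⁻¹ • g) ∈ K := by
    intro g hg hr
    set r := (g 1).re with hrdef
    have hg1 : g 1 = (r : ℂ) := pos_real_on_sa hg (IsSelfAdjoint.one (R := A))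
    constructor
    · intro x hx
      have h0 : 0 ≤ g x := hg x hx
      have : (StrongDual.toWeakDual (r⁻¹ • g)) x = r⁻¹ • g x := rfl
      rw [this]
      rw [Complex.nonneg_iff] at h0 ⊢
      constructor
      · rw [Complex.smul_re, smul_eq_mul]
        exact mul_nonneg (inv_nonneg.mpr hr.le) h0.1
      · rw [Complex.smul_im, smul_eq_mul, ← h0.2, mul_zero]
    · show r⁻¹ • g 1 = 1
      rw [hg1, Complex.real_smul, ← Complex.ofReal_mul, inv_mul_cancel₀ hr.ne', Complex.ofReal_one]
  rcases K.eq_empty_or_nonempty with hKe | hKne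
  · refine ⟨1, one_pos, fun g hg => ?_⟩
    have hg1 : 0 ≤ (g 1).re := (Complex.nonneg_iff.mp (hg 1 zero_le_one)).1
    have hga : 0 ≤ (g a).re := (Complex.nonneg_iff.mp (hg a ha)).1
    rcases hg1.lt_or_eq with hlt | heq
    · exact absurd (hmemK g hg hlt) (by rw [hKe]; simp)
    · rw [one_mul, ← heq]
      exact hga
  · have hφc : Continuous fun g : WeakDual ℂ A => (g a).re :=
      Complex.continuous_re.comp (WeakDual.eval_continuous a)
    obtain ⟨g₀, hg₀K, hmin⟩ := hKcomp.exists_isMinOn hKne hφc.continuousOn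
    set G₀ : A →L[ℂ] ℂ := WeakDual.toStrongDual g₀ with hG₀
    have hG₀pos : IsPosFunctional G₀ := hg₀K.1
    have hG₀ne : G₀ ≠ 0 := by
      intro h0
      have h1 : G₀ 1 = g₀ 1 := rfl
      rw [h0, hg₀K.2] at h1
      exact one_ne_zero h1.symm
    have hc : 0 < (G₀ a).re := (Complex.lt_def.mp (h G₀ hG₀pos hG₀ne)).1
    refine ⟨(G₀ a).re, hc, fun g hg => ?_⟩
    have hg1 : 0 ≤ (g 1).re := (Complex.nonneg_iff.mp (hg 1 zero_le_one)).1
    have hga : 0 ≤ (g a).re := (Complex.nonneg_iff.mp (hg a ha)).1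
    rcases hg1.lt_or_eq with hlt | heq
    · have hmem := hmemK g hg hlt
      have hle : (G₀ a).re ≤ ((StrongDual.toWeakDual (((g 1).re)⁻¹ • g)) a).re := hmin hmem
      have heval : ((StrongDual.toWeakDual (((g 1).re)⁻¹ • g)) a).re = ((g 1).re)⁻¹ * (g a).re := by
        rw [show ((StrongDual.toWeakDual (((g 1).re)⁻¹ • g)) a) = ((g 1).re)⁻¹ • g a from rfl]
        rw [Complex.smul_re, smul_eq_mul]
      rw [heval] at hle
      calc (G₀ a).re * (g 1).re ≤ (((g 1).re)⁻¹ * (g a).re) * (g 1).re :=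
            mul_le_mul_of_nonneg_right hle hg1
        _ = (g a).re := by field_simp
    · rw [← heq, mul_zero]
      exact hga

end RSem

/-- The seminorm `r_a` is faithful on hermitian functionals iff `f(a) > 0` for every
nonzero positive continuous linear functional `f`. -/
private theorem rSeminorm_faithful_iff' (a : A) (ha : 0 ≤ a) :
    (∀ f : A →L[ℂ] ℂ, IsHermitianFunctional f → (sInf { r : ℝ | ∃ f₁ f₂ : A →L[ℂ] ℂ,
        IsPosFunctional f₁ ∧ IsPosFunctional f₂ ∧
        f = f₁ - f₂ ∧ (r : ℂ) = f₁ a + f₂ a }) = 0 → f = 0) ↔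
      (∀ f : A →L[ℂ] ℂ, IsPosFunctional f → f ≠ 0 → 0 < f a) := by
  have hasa : IsSelfAdjoint a := IsSelfAdjoint.of_nonneg ha
  constructor
  · intro H g hgpos hgne
    have hga : 0 ≤ g a := hgpos a ha
    rcases hga.lt_or_eq with hlt | heq
    · exact hlt
    · exfalso
      apply hgne
      apply H g (RSem.pos_hermitian hgpos)
      have hzero : IsPosFunctional (0 : A →L[ℂ] ℂ) := by
        intro x hx
        simp
      have hmem : (0:ℝ) ∈ { r : ℝ | ∃ f₁ f₂ : A →L[ℂ] ℂ,
          IsPosFunctional f₁ ∧ IsPosFunctional f₂ ∧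
          g = f₁ - f₂ ∧ (r : ℂ) = f₁ a + f₂ a } := by
        refine ⟨g, 0, hgpos, hzero, by simp, ?_⟩
        simp [← heq]
      have hlb : ∀ r ∈ { r : ℝ | ∃ f₁ f₂ : A →L[ℂ] ℂ,
          IsPosFunctional f₁ ∧ IsPosFunctional f₂ ∧
          g = f₁ - f₂ ∧ (r : ℂ) = f₁ a + f₂ a }, (0:ℝ) ≤ r := by
        rintro r ⟨f₁, f₂, hf₁, hf₂, hd, hr⟩
        have h1 : 0 ≤ (f₁ a).re := (Complex.nonneg_iff.mp (hf₁ a ha)).1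
        have h2 : 0 ≤ (f₂ a).re := (Complex.nonneg_iff.mp (hf₂ a ha)).1
        have := congrArg Complex.re hr
        rw [Complex.ofReal_re, Complex.add_re] at this
        linarith
      exact le_antisymm (csInf_le ⟨0, hlb⟩ hmem) (le_csInf ⟨0, hmem⟩ hlb)
  · intro H f hfherm hf0
    obtain ⟨c, hc, hcle⟩ := RSem.exists_const ha H
    obtain ⟨f₁, f₂, hf₁, hf₂, hfd⟩ := RSem.exists_jordan hfherm
    set S : Set ℝ := { r : ℝ | ∃ g₁ g₂ : A →L[ℂ] ℂ,
        IsPosFunctional g₁ ∧ IsPosFunctional g₂ ∧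
        f = g₁ - g₂ ∧ (r : ℂ) = g₁ a + g₂ a } with hS
    have hmem : ((f₁ a).re + (f₂ a).re) ∈ S := by
      refine ⟨f₁, f₂, hf₁, hf₂, hfd, ?_⟩
      rw [Complex.ofReal_add, ← RSem.pos_real_on_sa hf₁ hasa, ← RSem.pos_real_on_sa hf₂ hasa]
    have hSne : S.Nonempty := ⟨_, hmem⟩
    suffices hsuff : ∀ ε : ℝ, 0 < ε → ‖f‖ ≤ 2 * c⁻¹ * ε by
      have hfn : ‖f‖ ≤ 0 := by
        by_contra hlt
        push_neg at hlt
        have h4 := hsuff (c * ‖f‖ / 4) (by positivity)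
        have : 2 * c⁻¹ * (c * ‖f‖ / 4) = ‖f‖ / 2 := by field_simp; ring
        rw [this] at h4
        linarith
      simpa using norm_le_zero_iff.mp hfn
    intro ε hε
    have hsinf : sInf S < ε := by
      rw [show sInf S = 0 from hf0]
      exact hε
    obtain ⟨r, hrS, hrε⟩ := exists_lt_of_csInf_lt hSne hsinf
    obtain ⟨g₁, g₂, hg₁, hg₂, hgd, hr⟩ := hrS
    have hre : r = (g₁ a).re + (g₂ a).re := by
      have := congrArg Complex.re hr
      rwa [Complex.ofReal_re, Complex.add_re] at this
    have hb1 : (g₁ 1).re ≤ c⁻¹ * (g₁ a).re := by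
      have h' := hcle g₁ hg₁
      calc (g₁ 1).re = c⁻¹ * (c * (g₁ 1).re) := by field_simp
        _ ≤ c⁻¹ * (g₁ a).re := mul_le_mul_of_nonneg_left h' (inv_nonneg.mpr hc.le)
    have hb2 : (g₂ 1).re ≤ c⁻¹ * (g₂ a).re := by
      have h' := hcle g₂ hg₂
      calc (g₂ 1).re = c⁻¹ * (c * (g₂ 1).re) := by field_simp
        _ ≤ c⁻¹ * (g₂ a).re := mul_le_mul_of_nonneg_left h' (inv_nonneg.mpr hc.le)
    have hcinv : (0:ℝ) ≤ c⁻¹ := inv_nonneg.mpr hc.le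
    calc ‖f‖ = ‖g₁ - g₂‖ := by rw [hgd]
      _ ≤ ‖g₁‖ + ‖g₂‖ := norm_sub_le g₁ g₂
      _ ≤ 2 * (g₁ 1).re + 2 * (g₂ 1).re :=
          add_le_add (RSem.pos_opNorm_le hg₁) (RSem.pos_opNorm_le hg₂)
      _ ≤ 2 * (c⁻¹ * (g₁ a).re) + 2 * (c⁻¹ * (g₂ a).re) := by
          gcongr
      _ = 2 * c⁻¹ * r := by rw [hre]; ring
      _ ≤ 2 * c⁻¹ * ε := by
          have h2c : (0:ℝ) ≤ 2 * c⁻¹ := by positivity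
          exact mul_le_mul_of_nonneg_left hrε.le h2c

/-- The seminorm `r_a` is faithful on hermitian functionals iff `f(a) > 0` for every
nonzero positive continuous linear functional `f`. -/
theorem rSeminorm_faithful_iff (a : A) (ha : 0 ≤ a) :
    (∀ f : A →L[ℂ] ℂ, IsHermitianFunctional f → rSeminorm a f = 0 → f = 0) ↔
      (∀ f : A →L[ℂ] ℂ, IsPosFunctional f → f ≠ 0 → 0 < f a) :=
  rSeminorm_faithful_iff' a ha
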